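/- Let D ⊂ ℝ² be the Zalcman-type domain D = 𝔻 \ closure(⋃_{l≥1} D(x_l, r_l)) with x_l = 2^{−l}, r_l = 2^{−3l}, and for j ≥ 1 set D^{t_j} = D(0, 1 + 2^{−2^{j/3}}) \ closure(⋃_{l=1}^j D(x_l, r̃_l)) with r_l − r̃_l = 2^{−2^{j/3}}, t_j = 2^{−j}. Then for all sufficiently large j: sup_{x ∈ ∂D} dist(x, ∂D^{t_j}) ≤ t_j and inf_{x ∈ ∂D} dist(x, ∂D^{t_j}) ≥ exp(−(log 2)/t_j^{1/3}). -/

import Mathlib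

open Metric

/-- Center `x_l = 2^{−l}` of the `l`-th deleted disc. -/
noncomputable def zalcmanCenter (l : ℕ) : ℂ := ((1 / 2 ^ l : ℝ) : ℂ)

/-- Radius `r_l = 2^{−3l}` of the `l`-th deleted disc. -/
noncomputable def zalcmanRadius (l : ℕ) : ℝ := 1 / 2 ^ (3 * l)

/-- The shrinking amount `2^{−2^{j/3}}`. -/
noncomputable def zalcmanEps (j : ℕ) : ℝ := (2 : ℝ) ^ (-(2 : ℝ) ^ ((j : ℝ) / 3))

/-- `t_j = 2^{−j}`. -/
noncomputable def zalcmanT (j : ℕ) : ℝ := 1 / 2 ^ j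

/-- The Zalcman-type domain `D = 𝔻 \ closure(⋃_{l ≥ 1} D(x_l, r_l))`. -/
noncomputable def zalcmanD : Set ℂ :=
  Metric.ball 0 1 \ closure (⋃ l : ℕ, Metric.ball (zalcmanCenter (l + 1)) (zalcmanRadius (l + 1)))

/-- The enlarged domain
`D^{t_j} = D(0, 1 + 2^{−2^{j/3}}) \ closure(⋃_{l=1}^{j} D(x_l, r̃_l))` with
`r̃_l = r_l − 2^{−2^{j/3}}`. -/
noncomputable def zalcmanDt (j : ℕ) : Set ℂ :=
  Metric.ball 0 (1 + zalcmanEps j) \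
    closure (⋃ l ∈ Finset.Icc 1 j, Metric.ball (zalcmanCenter l) (zalcmanRadius l - zalcmanEps j))


lemma zal_le_infDist {s : Set ℂ} (hs : s.Nonempty) {x : ℂ} {d : ℝ}
    (h : ∀ y ∈ s, d ≤ dist x y) : d ≤ Metric.infDist x s := by
  by_contra hlt
  push_neg at hlt
  obtain ⟨y, hy, hdy⟩ := (Metric.infDist_lt_iff hs).1 hlt
  exact absurd (h y hy) (not_le.2 hdy)

lemma eps_pos (j : ℕ) : 0 < zalcmanEps j := Real.rpow_pos_of_pos (by norm_num) _

lemma radius_pos (l : ℕ) : 0 < zalcmanRadius l := by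
  unfold zalcmanRadius; positivity

lemma center_norm (l : ℕ) : ‖zalcmanCenter l‖ = 1 / 2 ^ l := by
  unfold zalcmanCenter
  rw [Complex.norm_real, Real.norm_eq_abs, abs_of_pos (by positivity)]

lemma center_dist {l m : ℕ} (h : l < m) :
    dist (zalcmanCenter l) (zalcmanCenter m) = 1 / 2 ^ l - 1 / 2 ^ m := by
  unfold zalcmanCenter
  rw [Complex.dist_eq, ← Complex.ofReal_sub, Complex.norm_real, Real.norm_eq_abs, abs_of_pos]
  have : (2:ℝ) ^ l < 2 ^ m := pow_lt_pow_right₀ (by norm_num) h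
  have h1 : (0:ℝ) < 2 ^ l := by positivity
  have h2 : (0:ℝ) < 2 ^ m := by positivity
  rw [sub_pos, div_lt_div_iff₀ h2 h1]
  nlinarith

lemma radius_le_center (l : ℕ) : zalcmanRadius l ≤ 1 / 2 ^ l := by
  unfold zalcmanRadius
  apply div_le_div_of_nonneg_left (by norm_num) (by positivity)
  exact pow_le_pow_right₀ (by norm_num) (by omega)

lemma sep_aux {a b : ℝ} (ha : 2 ≤ a) (hb : 2 * a ≤ b) : 1/a^3 + 1/b^3 < 1/a - 1/b := by
  have ha0 : (0:ℝ) < a := by linarith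
  have hb0 : (0:ℝ) < b := by linarith
  have hab : a < b := by linarith
  have hcube : a^3 < b^3 := by
    have := pow_lt_pow_left₀ hab ha0.le (n := 3) (by norm_num)
    exact this
  have hba : b/2 ≤ b - a := by linarith
  have h4a : (4:ℝ) ≤ a^2 := by nlinarith
  have step2 : b^2*(b/2) ≤ b^2*(b-a) := mul_le_mul_of_nonneg_left hba (by positivity)
  have step3 : 4*(b^2*(b-a)) ≤ a^2*(b^2*(b-a)) :=
    mul_le_mul_of_nonneg_right h4a (by nlinarith)
  have K : b^3 + a^3 < a^2*b^2*(b-a) := by nlinarith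
  rw [div_add_div _ _ (by positivity) (by positivity),
    div_sub_div _ _ (ne_of_gt ha0) (ne_of_gt hb0),
    div_lt_div_iff₀ (by positivity) (by positivity)]
  nlinarith [mul_lt_mul_of_pos_right K (mul_pos ha0 hb0)]

/-- strict separation of the deleted discs -/
lemma sep {l m : ℕ} (hl : 1 ≤ l) (hlm : l < m) :
    zalcmanRadius l + zalcmanRadius m < dist (zalcmanCenter l) (zalcmanCenter m) := by
  rw [center_dist hlm]
  unfold zalcmanRadius
  have e1 : (2:ℝ)^(3*l) = ((2:ℝ)^l)^3 := by rw [mul_comm, pow_mul]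
  have e2 : (2:ℝ)^(3*m) = ((2:ℝ)^m)^3 := by rw [mul_comm, pow_mul]
  rw [e1, e2]
  apply sep_aux
  · calc (2:ℝ) = 2^1 := (pow_one 2).symm
    _ ≤ 2^l := pow_le_pow_right₀ (by norm_num) hl
  · calc (2:ℝ) * 2^l = 2^(l+1) := by ring
    _ ≤ 2^m := pow_le_pow_right₀ (by norm_num) (by omega)

lemma sep' {l m : ℕ} (hl : 1 ≤ l) (hm : 1 ≤ m) (h : l ≠ m) :
    zalcmanRadius l + zalcmanRadius m < dist (zalcmanCenter l) (zalcmanCenter m) := by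
  rcases lt_or_gt_of_ne h with hlt | hgt
  · exact sep hl hlt
  · rw [dist_comm, add_comm]; exact sep hm hgt

lemma pow_half_mono {a b : ℕ} (h : a ≤ b) : (1:ℝ)/2^b ≤ 1/2^a := by
  apply div_le_div_of_nonneg_left (by norm_num) (by positivity)
  exact pow_le_pow_right₀ (by norm_num) h

lemma center_norm_le {l : ℕ} (hl : 1 ≤ l) : ‖zalcmanCenter l‖ ≤ 1/2 := by
  rw [center_norm]
  have := pow_half_mono hl
  norm_num at this ⊢
  linarith

lemma radius_le_eighth {l : ℕ} (hl : 1 ≤ l) : zalcmanRadius l ≤ 1/8 := by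
  unfold zalcmanRadius
  have : (1:ℝ)/2^(3*l) ≤ 1/2^(3*1) := pow_half_mono (by omega)
  norm_num at this ⊢
  linarith

lemma Dt_open (j : ℕ) : IsOpen (zalcmanDt j) :=
  isOpen_ball.sdiff isClosed_closure

lemma D_open : IsOpen zalcmanD :=
  isOpen_ball.sdiff isClosed_closure

lemma closureU_subset (j : ℕ) :
    closure (⋃ l ∈ Finset.Icc 1 j, ball (zalcmanCenter l) (zalcmanRadius l - zalcmanEps j)) ⊆
      ⋃ l ∈ Finset.Icc 1 j, closedBall (zalcmanCenter l) (zalcmanRadius l - zalcmanEps j) := by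
  apply closure_minimal
  · exact Set.iUnion₂_mono fun l _ => ball_subset_closedBall
  · exact Set.Finite.isClosed_biUnion (Finset.Icc 1 j).finite_toSet
      fun l _ => Metric.isClosed_closedBall

/-- the norm of any point of a (shrunk or not) deleted closed ball is at most 5/8 -/
lemma ball_point_norm_le {l : ℕ} (hl : 1 ≤ l) {s : ℝ} (hs : s ≤ zalcmanRadius l) (z : ℂ)
    (hz : z ∈ closedBall (zalcmanCenter l) s) : ‖z‖ ≤ 5/8 := by
  have h1 : dist z (zalcmanCenter l) ≤ s := mem_closedBall.1 hz
  have h2 : ‖z‖ ≤ ‖zalcmanCenter l‖ + dist z (zalcmanCenter l) := by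
    rw [dist_eq_norm]
    calc ‖z‖ = ‖zalcmanCenter l + (z - zalcmanCenter l)‖ := by ring_nf
    _ ≤ ‖zalcmanCenter l‖ + ‖z - zalcmanCenter l‖ := norm_add_le _ _
  have h3 := center_norm_le hl
  have h4 := radius_le_eighth hl
  linarith

lemma frontier_mem_outer {j : ℕ} (heps : zalcmanEps j ≤ 1) (z : ℂ)
    (hz : ‖z‖ = 1 + zalcmanEps j) : z ∈ frontier (zalcmanDt j) := by
  rw [frontier, (Dt_open j).interior_eq]
  have hnotmem : z ∉ zalcmanDt j := by
    intro hmem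
    have := hmem.1
    rw [mem_ball_zero_iff, hz] at this
    exact lt_irrefl _ this
  refine ⟨?_, hnotmem⟩
  rw [Metric.mem_closure_iff]
  intro ε hε
  set δ : ℝ := min (ε/4) (1/8) with hδdef
  have hδpos : 0 < δ := by positivity
  have hδ8 : δ ≤ 1/8 := min_le_right _ _
  have hδε : δ ≤ ε/4 := min_le_left _ _
  refine ⟨((1 - δ : ℝ) : ℂ) * z, ⟨?_, ?_⟩, ?_⟩
  · rw [mem_ball_zero_iff, norm_mul, Complex.norm_real, Real.norm_eq_abs,
      abs_of_pos (by linarith), hz]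
    nlinarith [eps_pos j]
  · intro hmem
    have := closureU_subset j hmem
    simp only [Set.mem_iUnion, Finset.mem_Icc] at this
    obtain ⟨l, ⟨hl1, _⟩, hball⟩ := this
    have hb : ‖((1 - δ : ℝ) : ℂ) * z‖ ≤ 5/8 :=
      ball_point_norm_le hl1
        (by nlinarith [eps_pos j] : zalcmanRadius l - zalcmanEps j ≤ zalcmanRadius l) _ hball
    rw [norm_mul, Complex.norm_real, Real.norm_eq_abs, abs_of_pos (by linarith), hz] at hb
    nlinarith [eps_pos j]
  · have hd : dist z (((1 - δ : ℝ) : ℂ) * z) = δ * ‖z‖ := by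
      rw [dist_eq_norm]
      have he : z - ((1 - δ : ℝ) : ℂ) * z = ((δ : ℝ) : ℂ) * z := by push_cast; ring
      rw [he, norm_mul, Complex.norm_real, Real.norm_eq_abs, abs_of_pos hδpos]
    rw [hd, hz]
    nlinarith [eps_pos j]

lemma frontier_mem_inner {j l : ℕ} (hl1 : 1 ≤ l) (hlj : l ≤ j)
    (hlt : zalcmanEps j < zalcmanRadius l) (z : ℂ)
    (hz : dist z (zalcmanCenter l) = zalcmanRadius l - zalcmanEps j) :
    z ∈ frontier (zalcmanDt j) := by
  set ε0 := zalcmanEps j with hε0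
  set ρ := zalcmanRadius l with hρ
  have hρpos : 0 < ρ := radius_pos l
  have hεpos : 0 < ε0 := eps_pos j
  have hshrunk : 0 < ρ - ε0 := by linarith
  have hρ8 : ρ ≤ 1/8 := radius_le_eighth hl1
  have hc : ‖zalcmanCenter l‖ ≤ 1/2 := center_norm_le hl1
  rw [frontier, (Dt_open j).interior_eq]
  have hnotmem : z ∉ zalcmanDt j := by
    intro hmem
    apply hmem.2
    have hmem2 : z ∈ closedBall (zalcmanCenter l) (ρ - ε0) := by
      rw [mem_closedBall]; exact le_of_eq hz
    have hcb : closedBall (zalcmanCenter l) (ρ - ε0) ⊆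
        closure (⋃ m ∈ Finset.Icc 1 j,
          ball (zalcmanCenter m) (zalcmanRadius m - zalcmanEps j)) := by
      rw [← closure_ball (zalcmanCenter l) (ne_of_gt hshrunk)]
      apply closure_mono
      intro w hw
      simp only [Set.mem_iUnion]
      exact ⟨l, by simp [Finset.mem_Icc, hl1, hlj], hw⟩
    exact hcb hmem2
  refine ⟨?_, hnotmem⟩
  rw [Metric.mem_closure_iff]
  intro ε hε
  set δ : ℝ := min (min 1 (ε0 / ρ)) (ε / (2 * ρ)) with hδdef
  have hδpos : 0 < δ := by positivity
  have hδ1 : δ ≤ 1 := le_trans (min_le_left _ _) (min_le_left _ _)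
  have hδε0 : δ ≤ ε0 / ρ := le_trans (min_le_left _ _) (min_le_right _ _)
  have hδε : δ ≤ ε / (2 * ρ) := min_le_right _ _
  have hδρ : δ * ρ ≤ ε0 := by
    have h := mul_le_mul_of_nonneg_right hδε0 hρpos.le
    rwa [div_mul_cancel₀ _ (ne_of_gt hρpos)] at h
  have hδρε : δ * ρ ≤ ε/2 := by
    have h := mul_le_mul_of_nonneg_right hδε hρpos.le
    have he : ε / (2 * ρ) * ρ = ε / 2 := by
      field_simp
    linarith
  set y := zalcmanCenter l + ((1 + δ : ℝ) : ℂ) * (z - zalcmanCenter l) with hy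
  have hdyl : dist y (zalcmanCenter l) = (1 + δ) * (ρ - ε0) := by
    rw [hy, dist_eq_norm, add_sub_cancel_left, norm_mul, Complex.norm_real,
      Real.norm_eq_abs, abs_of_pos (by linarith), ← dist_eq_norm, hz]
  refine ⟨y, ⟨?_, ?_⟩, ?_⟩
  · rw [mem_ball_zero_iff]
    have h2 : ‖y‖ ≤ ‖zalcmanCenter l‖ + dist y (zalcmanCenter l) := by
      rw [dist_eq_norm]
      calc ‖y‖ = ‖zalcmanCenter l + (y - zalcmanCenter l)‖ := by ring_nf
      _ ≤ ‖zalcmanCenter l‖ + ‖y - zalcmanCenter l‖ := norm_add_le _ _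
    rw [hdyl] at h2
    nlinarith
  · intro hmem
    have h := closureU_subset j hmem
    simp only [Set.mem_iUnion, Finset.mem_Icc] at h
    obtain ⟨m, ⟨hm1, hmj⟩, hball⟩ := h
    by_cases hml : m = l
    · subst hml
      have h2 : dist y (zalcmanCenter m) ≤ ρ - ε0 := mem_closedBall.1 hball
      rw [hdyl] at h2
      nlinarith
    · have hs := sep' hm1 hl1 hml
      have htri : dist (zalcmanCenter l) (zalcmanCenter m) ≤
          dist y (zalcmanCenter l) + dist y (zalcmanCenter m) := by
        rw [dist_comm y (zalcmanCenter l)]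
        exact dist_triangle _ _ _
      have hym : dist y (zalcmanCenter m) ≤ zalcmanRadius m - ε0 := mem_closedBall.1 hball
      rw [hdyl] at htri
      rw [dist_comm] at hs
      have h1δ : (1 + δ) * (ρ - ε0) ≤ ρ := by nlinarith
      nlinarith [radius_pos m]
  · rw [dist_eq_norm]
    have he : z - y = -(((δ : ℝ) : ℂ) * (z - zalcmanCenter l)) := by
      rw [hy]; push_cast; ring
    rw [he, norm_neg, norm_mul, Complex.norm_real, Real.norm_eq_abs, abs_of_pos hδpos,
      ← dist_eq_norm, hz]
    nlinarith

lemma frontierDt_sub (j : ℕ) : frontier (zalcmanDt j) ⊆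
    sphere (0:ℂ) (1 + zalcmanEps j) ∪
      ⋃ m ∈ Finset.Icc 1 j, closedBall (zalcmanCenter m) (zalcmanRadius m - zalcmanEps j) := by
  intro p hp
  rw [frontier, (Dt_open j).interior_eq] at hp
  obtain ⟨hpc, hpn⟩ := hp
  have hone : (0:ℝ) < 1 + zalcmanEps j := by nlinarith [eps_pos j]
  have hball : p ∈ closedBall (0:ℂ) (1 + zalcmanEps j) := by
    have hsub : closure (zalcmanDt j) ⊆ closure (ball (0:ℂ) (1 + zalcmanEps j)) :=
      closure_mono Set.diff_subset
    have h2 := hsub hpc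
    rwa [closure_ball (0:ℂ) (ne_of_gt hone)] at h2
  by_cases hmem : p ∈ ball (0:ℂ) (1 + zalcmanEps j)
  · right
    have h3 : p ∈ closure (⋃ l ∈ Finset.Icc 1 j,
        ball (zalcmanCenter l) (zalcmanRadius l - zalcmanEps j)) := by
      by_contra h
      exact hpn ⟨hmem, h⟩
    exact closureU_subset j h3
  · left
    rw [mem_sphere_iff_norm, sub_zero]
    rw [mem_ball_zero_iff, not_lt] at hmem
    rw [mem_closedBall, dist_zero_right] at hball
    linarith

lemma frontierD_sub : frontier zalcmanD ⊆
    ({0} : Set ℂ) ∪ sphere (0:ℂ) 1 ∪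
      ⋃ l : ℕ, sphere (zalcmanCenter (l+1)) (zalcmanRadius (l+1)) := by
  intro p hp
  rw [frontier, D_open.interior_eq] at hp
  obtain ⟨hpc, hpn⟩ := hp
  set U := ⋃ l : ℕ, ball (zalcmanCenter (l+1)) (zalcmanRadius (l+1)) with hU
  have hUopen : IsOpen U := isOpen_iUnion fun _ => isOpen_ball
  have hnb : ∀ l : ℕ, p ∉ ball (zalcmanCenter (l+1)) (zalcmanRadius (l+1)) := by
    intro l hball
    have h1 : closure zalcmanD ⊆ closure ((closure U)ᶜ) :=
      closure_mono fun x hx => hx.2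
    rw [closure_compl] at h1
    exact (h1 hpc) (interior_maximal subset_closure hUopen (Set.mem_iUnion.2 ⟨l, hball⟩))
  have hnorm : ‖p‖ ≤ 1 := by
    have h1 : closure zalcmanD ⊆ closure (ball (0:ℂ) 1) := closure_mono Set.diff_subset
    have h2 := h1 hpc
    rw [closure_ball (0:ℂ) one_ne_zero, mem_closedBall, dist_zero_right] at h2
    exact h2
  by_cases hb : p ∈ ball (0:ℂ) 1
  · -- p ∈ closure U
    have hpU : p ∈ closure U := by
      by_contra h
      exact hpn ⟨hb, h⟩
    by_cases hp0 : p = 0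
    · exact Or.inl (Or.inl (by simp [hp0]))
    · have hppos : 0 < ‖p‖ := norm_pos_iff.2 hp0
      obtain ⟨L, hL⟩ := exists_pow_lt_of_lt_one (half_pos hppos) (by norm_num : (1:ℝ)/2 < 1)
      have hL' : (1:ℝ)/2^L < ‖p‖/2 := by
        rwa [div_pow, one_pow] at hL
      have hsub : U ⊆ (⋃ l ∈ Finset.range L,
          ball (zalcmanCenter (l+1)) (zalcmanRadius (l+1))) ∪ closedBall (0:ℂ) (‖p‖/2) := by
        intro z hz
        rw [hU, Set.mem_iUnion] at hz
        obtain ⟨l, hzl⟩ := hz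
        by_cases hlL : l < L
        · left
          exact Set.mem_biUnion (Finset.mem_range.2 hlL) hzl
        · right
          rw [mem_closedBall, dist_zero_right]
          have h1 : dist z (zalcmanCenter (l+1)) < zalcmanRadius (l+1) := mem_ball.1 hzl
          have h2 : ‖z‖ ≤ ‖zalcmanCenter (l+1)‖ + dist z (zalcmanCenter (l+1)) := by
            rw [dist_eq_norm]
            calc ‖z‖ = ‖zalcmanCenter (l+1) + (z - zalcmanCenter (l+1))‖ := by ring_nf
            _ ≤ _ := norm_add_le _ _
          have h3 : zalcmanRadius (l+1) ≤ 1/2^(l+1) := radius_le_center (l+1)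
          have h4 : (1:ℝ)/2^(l+1) + 1/2^(l+1) = 1/2^l := by
            rw [pow_succ]; field_simp; ring
          have h5 : (1:ℝ)/2^l ≤ 1/2^L := pow_half_mono (by omega)
          rw [center_norm] at h2
          linarith
      have hclos : p ∈ (⋃ l ∈ Finset.range L,
          closedBall (zalcmanCenter (l+1)) (zalcmanRadius (l+1))) ∪ closedBall (0:ℂ) (‖p‖/2) := by
        have h1 := closure_mono hsub hpU
        rw [closure_union] at h1
        rcases h1 with h1 | h1
        · left
          have h2 : closure (⋃ l ∈ Finset.range L,
              ball (zalcmanCenter (l+1)) (zalcmanRadius (l+1))) ⊆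
              ⋃ l ∈ Finset.range L, closedBall (zalcmanCenter (l+1)) (zalcmanRadius (l+1)) := by
            apply closure_minimal
            · exact Set.iUnion₂_mono fun l _ => ball_subset_closedBall
            · exact Set.Finite.isClosed_biUnion (Finset.range L).finite_toSet
                fun l _ => Metric.isClosed_closedBall
          exact h2 h1
        · right
          rwa [IsClosed.closure_eq Metric.isClosed_closedBall] at h1
      rcases hclos with h1 | h1
      · rw [Set.mem_iUnion₂] at h1
        obtain ⟨l, _, hl⟩ := h1
        right
        rw [Set.mem_iUnion]
        refine ⟨l, ?_⟩
        rw [mem_sphere]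
        have := mem_closedBall.1 hl
        have h2 := hnb l
        rw [mem_ball, not_lt] at h2
        linarith
      · exfalso
        rw [mem_closedBall, dist_zero_right] at h1
        linarith
  · left; right
    rw [mem_ball_zero_iff, not_lt] at hb
    rw [mem_sphere_iff_norm, sub_zero]
    linarith

lemma nat_pow_big {k : ℕ} (hk : 7 ≤ k) : 9 * k + 7 ≤ 2 ^ k := by
  obtain ⟨m, rfl⟩ : ∃ m, k = m + 7 := ⟨k - 7, by omega⟩
  have h1 : m < 2 ^ m := Nat.lt_two_pow_self
  calc 9 * (m + 7) + 7 = 9 * m + 70 := by ring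
  _ ≤ 128 * (m + 1) := by omega
  _ ≤ 128 * 2 ^ m := by
      apply Nat.mul_le_mul_left
      omega
  _ = 2 ^ (m + 7) := by ring
lemma exponent_big {j : ℕ} (hj : 100 ≤ j) : ((3 * j + 1 : ℕ) : ℝ) ≤ (2:ℝ) ^ ((j:ℝ)/3) := by
  set k := j / 3 with hk
  have hk7 : 7 ≤ k := by omega
  have hkj : 3 * j + 1 ≤ 9 * k + 7 := by omega
  have h1 : ((3 * j + 1 : ℕ) : ℝ) ≤ ((2 ^ k : ℕ) : ℝ) := by
    exact_mod_cast le_trans hkj (nat_pow_big hk7)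
  have h2 : ((2 ^ k : ℕ) : ℝ) = (2:ℝ) ^ ((k:ℕ):ℝ) := by
    rw [Real.rpow_natCast]; push_cast; ring
  have h3 : ((k:ℕ):ℝ) ≤ (j:ℝ)/3 := by
    have : (k * 3 : ℕ) ≤ j := by omega
    have h4 : ((k:ℕ):ℝ) * 3 ≤ (j:ℝ) := by exact_mod_cast this
    linarith
  calc ((3 * j + 1 : ℕ) : ℝ) ≤ (2:ℝ) ^ ((k:ℕ):ℝ) := by rw [← h2]; exact h1
  _ ≤ (2:ℝ) ^ ((j:ℝ)/3) := Real.rpow_le_rpow_of_exponent_le one_le_two h3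

lemma eps_small {j : ℕ} (hj : 100 ≤ j) : zalcmanEps j ≤ 1 / 2 ^ (3 * j + 1) := by
  unfold zalcmanEps
  have h1 : (2:ℝ) ^ (-(2:ℝ) ^ ((j:ℝ)/3)) ≤ (2:ℝ) ^ (-((3 * j + 1 : ℕ) : ℝ)) :=
    Real.rpow_le_rpow_of_exponent_le one_le_two (neg_le_neg (exponent_big hj))
  have h2 : (2:ℝ) ^ (-((3 * j + 1 : ℕ) : ℝ)) = 1 / 2 ^ (3 * j + 1) := by
    rw [Real.rpow_neg (by norm_num), Real.rpow_natCast, one_div]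
  linarith

lemma exp_eq (j : ℕ) :
    Real.exp (-(Real.log 2) / (zalcmanT j) ^ ((1 : ℝ) / 3)) = zalcmanEps j := by
  have ht : zalcmanT j = (2:ℝ) ^ (-(j:ℝ)) := by
    unfold zalcmanT
    rw [Real.rpow_neg (by norm_num), Real.rpow_natCast, one_div]
  rw [ht, ← Real.rpow_mul (by norm_num : (0:ℝ) ≤ 2)]
  have h1 : (2:ℝ) ^ (-(j:ℝ) * ((1:ℝ)/3)) = ((2:ℝ) ^ ((j:ℝ)/3))⁻¹ := by
    rw [← Real.rpow_neg (by norm_num)]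
    congr 1
    ring
  rw [h1]
  have h2 : -(Real.log 2) / ((2:ℝ) ^ ((j:ℝ)/3))⁻¹ = Real.log 2 * (-((2:ℝ) ^ ((j:ℝ)/3))) := by
    rw [div_eq_mul_inv, inv_inv]
    ring
  have h3 : (2:ℝ) ^ (-((2:ℝ) ^ ((j:ℝ)/3))) =
      Real.exp (Real.log 2 * (-((2:ℝ) ^ ((j:ℝ)/3)))) :=
    Real.rpow_def_of_pos (by norm_num) _
  rw [h2, zalcmanEps]
  exact h3.symm

lemma real_dist (a b : ℝ) : dist ((a:ℂ)) ((b:ℂ)) = |a - b| := by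
  rw [Complex.dist_eq, ← Complex.ofReal_sub, Complex.norm_real, Real.norm_eq_abs]


/-- For all sufficiently large `j`,
`sup_{x ∈ ∂D} dist(x, ∂D^{t_j}) ≤ t_j` and
`inf_{x ∈ ∂D} dist(x, ∂D^{t_j}) ≥ exp(−(log 2)/t_j^{1/3})`. -/
theorem zalcman_boundary_distance_estimates :
    ∃ N : ℕ, ∀ j : ℕ, N ≤ j →
      (∀ p ∈ frontier zalcmanD,
        Metric.infDist p (frontier (zalcmanDt j)) ≤ zalcmanT j) ∧
      (∀ p ∈ frontier zalcmanD,
        Real.exp (-(Real.log 2) / (zalcmanT j) ^ ((1 : ℝ) / 3)) ≤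
          Metric.infDist p (frontier (zalcmanDt j))) := by
  refine ⟨100, fun j hj => ?_⟩
  have h1j : 1 ≤ j := by omega
  have hepspos := eps_pos j
  have heps : zalcmanEps j ≤ 1/2^(3*j+1) := eps_small hj
  have hepsrj : ∀ m : ℕ, m ≤ j → zalcmanEps j < zalcmanRadius m := by
    intro m hm
    have h1 : (2:ℝ)^(3*m) < 2^(3*j+1) := pow_lt_pow_right₀ one_lt_two (by omega)
    have h2 : (1:ℝ)/2^(3*j+1) < 1/2^(3*m) := by
      apply div_lt_div_of_pos_left (by norm_num) (by positivity) h1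
    unfold zalcmanRadius
    linarith
  have heps1 : zalcmanEps j ≤ 1/8 := by
    have h1 : (1:ℝ)/2^(3*j+1) ≤ 1/2^3 := pow_half_mono (by omega)
    have h2 : (1:ℝ)/2^3 = 1/8 := by norm_num
    linarith
  have hepstj : zalcmanEps j ≤ zalcmanT j := by
    have h1 : (1:ℝ)/2^(3*j+1) ≤ 1/2^j := pow_half_mono (by omega)
    unfold zalcmanT
    linarith
  have hrjtj : zalcmanRadius j ≤ 1/2^j := radius_le_center j
  -- the special frontier point Λ to the left of the j-th shrunk disc
  set Λ : ℂ := ((1/2^j - (zalcmanRadius j - zalcmanEps j) : ℝ) : ℂ) with hΛdef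
  have hΛfront : Λ ∈ frontier (zalcmanDt j) := by
    apply frontier_mem_inner h1j le_rfl (hepsrj j le_rfl)
    show dist Λ (zalcmanCenter j) = _
    rw [hΛdef]
    unfold zalcmanCenter
    rw [real_dist]
    have h0 : 0 ≤ zalcmanRadius j - zalcmanEps j := by linarith [hepsrj j le_rfl]
    rw [abs_of_nonpos (by linarith), neg_sub]
    ring
  have hΛnorm : ‖Λ‖ = 1/2^j - zalcmanRadius j + zalcmanEps j := by
    rw [hΛdef, Complex.norm_real, Real.norm_eq_abs, abs_of_nonneg (by linarith)]
    ring_nf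
  -- nonemptiness of the frontier of D^t
  have houter : ‖(((1 + zalcmanEps j : ℝ)) : ℂ)‖ = 1 + zalcmanEps j := by
    rw [Complex.norm_real, Real.norm_eq_abs, abs_of_pos (by linarith)]
  have hfrontne : (frontier (zalcmanDt j)).Nonempty :=
    ⟨_, frontier_mem_outer (by linarith) _ houter⟩
  constructor
  · -- upper bound
    intro p hp
    rcases frontierD_sub hp with (hp0 | hps) | hpl
    · -- p = 0
      rw [Set.mem_singleton_iff] at hp0
      subst hp0
      calc Metric.infDist (0:ℂ) (frontier (zalcmanDt j)) ≤ dist (0:ℂ) Λ :=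
            Metric.infDist_le_dist_of_mem hΛfront
      _ ≤ zalcmanT j := by
          rw [dist_comm, dist_zero_right, hΛnorm]
          unfold zalcmanT
          linarith [(hepsrj j le_rfl).le]
    · -- p on the unit circle
      rw [mem_sphere_iff_norm, sub_zero] at hps
      set q : ℂ := (((1 + zalcmanEps j : ℝ)) : ℂ) * p with hq
      have hqnorm : ‖q‖ = 1 + zalcmanEps j := by
        rw [hq, norm_mul, houter, hps, mul_one]
      have hqf : q ∈ frontier (zalcmanDt j) := frontier_mem_outer (by linarith) _ hqnorm
      have hdpq : dist p q = zalcmanEps j := by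
        rw [dist_eq_norm, hq]
        have he : p - (((1 + zalcmanEps j : ℝ)) : ℂ) * p
            = -(((zalcmanEps j : ℝ) : ℂ) * p) := by push_cast; ring
        rw [he, norm_neg, norm_mul, Complex.norm_real, Real.norm_eq_abs,
          abs_of_pos hepspos, hps, mul_one]
      calc Metric.infDist p (frontier (zalcmanDt j)) ≤ dist p q :=
            Metric.infDist_le_dist_of_mem hqf
      _ ≤ zalcmanT j := by rw [hdpq]; exact hepstj
    · -- p on the boundary of a deleted disc
      rw [Set.mem_iUnion] at hpl
      obtain ⟨l, hpl⟩ := hpl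
      rw [mem_sphere] at hpl
      set L := l + 1 with hL
      have hL1 : 1 ≤ L := by omega
      by_cases hLj : L ≤ j
      · -- shrink radially
        have hrL := radius_pos L
        have hεL := hepsrj L hLj
        set s : ℝ := (zalcmanRadius L - zalcmanEps j)/zalcmanRadius L with hs
        have hs0 : 0 ≤ s := div_nonneg (by linarith) hrL.le
        have hs1 : s ≤ 1 := by
          rw [hs, div_le_one hrL]; linarith
        set q : ℂ := zalcmanCenter L + ((s : ℝ) : ℂ) * (p - zalcmanCenter L) with hq
        have hqd : dist q (zalcmanCenter L) = zalcmanRadius L - zalcmanEps j := by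
          rw [hq, dist_eq_norm, add_sub_cancel_left, norm_mul, Complex.norm_real,
            Real.norm_eq_abs, abs_of_nonneg hs0, ← dist_eq_norm, hpl, hs,
            div_mul_cancel₀ _ (ne_of_gt hrL)]
        have hqf : q ∈ frontier (zalcmanDt j) := frontier_mem_inner hL1 hLj hεL q hqd
        have hdpq : dist p q = zalcmanEps j := by
          rw [dist_eq_norm, hq]
          have he : p - (zalcmanCenter L + ((s : ℝ) : ℂ) * (p - zalcmanCenter L))
              = (((1 - s : ℝ)) : ℂ) * (p - zalcmanCenter L) := by push_cast; ring
          rw [he, norm_mul, Complex.norm_real, Real.norm_eq_abs,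
            abs_of_nonneg (by linarith), ← dist_eq_norm, hpl]
          rw [hs]
          field_simp
          ring
        calc Metric.infDist p (frontier (zalcmanDt j)) ≤ dist p q :=
              Metric.infDist_le_dist_of_mem hqf
        _ ≤ zalcmanT j := by rw [hdpq]; exact hepstj
      · -- the deleted disc is not removed from D^t : aim at Λ
        push_neg at hLj
        have hdcΛ : dist (zalcmanCenter L) Λ =
            (1/2^j - zalcmanRadius j + zalcmanEps j) - 1/2^L := by
          rw [hΛdef]
          unfold zalcmanCenter
          rw [real_dist]
          have h1 : (1:ℝ)/2^L ≤ 1/2^(j+1) := pow_half_mono (by omega)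
          have h2 : zalcmanRadius j ≤ 1/2^(j+1) := by
            have := pow_half_mono (show j+1 ≤ 3*j by omega)
            unfold zalcmanRadius
            linarith
          have h3 : (1:ℝ)/2^(j+1) + 1/2^(j+1) = 1/2^j := by
            rw [pow_succ]; field_simp; ring
          rw [abs_of_nonpos (by linarith), neg_sub]
          ring
        calc Metric.infDist p (frontier (zalcmanDt j)) ≤ dist p Λ :=
              Metric.infDist_le_dist_of_mem hΛfront
        _ ≤ dist p (zalcmanCenter L) + dist (zalcmanCenter L) Λ := dist_triangle _ _ _
        _ ≤ zalcmanT j := by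
            rw [hpl, hdcΛ]
            have h1 : zalcmanRadius L ≤ 1/2^L := radius_le_center L
            have h2 : zalcmanEps j ≤ zalcmanRadius j := (hepsrj j le_rfl).le
            unfold zalcmanT
            linarith
  · -- lower bound
    intro p hp
    rw [exp_eq j]
    apply zal_le_infDist hfrontne
    intro q hq
    have hqF := frontierDt_sub j hq
    rcases frontierD_sub hp with (hp0 | hps) | hpl
    · -- p = 0
      rw [Set.mem_singleton_iff] at hp0
      subst hp0
      rcases hqF with hqs | hqb
      · rw [mem_sphere_iff_norm, sub_zero] at hqs
        rw [dist_comm, dist_zero_right, hqs]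
        linarith
      · simp only [Set.mem_iUnion, Finset.mem_Icc] at hqb
        obtain ⟨m, ⟨hm1, hmj⟩, hqm⟩ := hqb
        rw [mem_closedBall] at hqm
        have h1 : dist (0:ℂ) (zalcmanCenter m) ≤ dist (0:ℂ) q + dist q (zalcmanCenter m) :=
          dist_triangle _ _ _
        have h2 : dist (0:ℂ) (zalcmanCenter m) = 1/2^m := by
          rw [dist_comm, dist_zero_right, center_norm]
        have h3 : zalcmanRadius m ≤ 1/2^m := radius_le_center m
        linarith
    · -- p on the unit circle
      rw [mem_sphere_iff_norm, sub_zero] at hps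
      rcases hqF with hqs | hqb
      · rw [mem_sphere_iff_norm, sub_zero] at hqs
        have h1 : ‖q‖ - ‖p‖ ≤ ‖q - p‖ := norm_sub_norm_le _ _
        rw [dist_comm, dist_eq_norm]
        linarith
      · simp only [Set.mem_iUnion, Finset.mem_Icc] at hqb
        obtain ⟨m, ⟨hm1, hmj⟩, hqm⟩ := hqb
        have hq58 : ‖q‖ ≤ 5/8 := ball_point_norm_le hm1 (by linarith [(hepsrj m hmj).le] :
          zalcmanRadius m - zalcmanEps j ≤ zalcmanRadius m) q hqm
        have h1 : ‖p‖ - ‖q‖ ≤ ‖p - q‖ := norm_sub_norm_le _ _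
        rw [dist_eq_norm]
        linarith
    · -- p on the boundary of a deleted disc
      rw [Set.mem_iUnion] at hpl
      obtain ⟨l, hpl⟩ := hpl
      rw [mem_sphere] at hpl
      set L := l + 1 with hL
      have hL1 : 1 ≤ L := by omega
      have hrL := radius_pos L
      rcases hqF with hqs | hqb
      · rw [mem_sphere_iff_norm, sub_zero] at hqs
        have hp58 : ‖p‖ ≤ 5/8 := ball_point_norm_le hL1 le_rfl p
          (by rw [mem_closedBall]; exact le_of_eq hpl)
        have h1 : ‖q‖ - ‖p‖ ≤ ‖q - p‖ := norm_sub_norm_le _ _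
        rw [dist_comm, dist_eq_norm]
        linarith
      · simp only [Set.mem_iUnion, Finset.mem_Icc] at hqb
        obtain ⟨m, ⟨hm1, hmj⟩, hqm⟩ := hqb
        rw [mem_closedBall] at hqm
        by_cases hml : m = L
        · rw [hml] at hqm
          have h1 : dist p (zalcmanCenter L) ≤ dist p q + dist q (zalcmanCenter L) :=
            dist_triangle _ _ _
          rw [hpl] at h1
          linarith
        · have hs := sep' hm1 hL1 hml
          have h1 : dist (zalcmanCenter m) (zalcmanCenter L) ≤
              dist (zalcmanCenter m) q + dist q p + dist p (zalcmanCenter L) :=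
            dist_triangle4 _ _ _ _
          rw [hpl, dist_comm (zalcmanCenter m) q, dist_comm q p] at h1
          linarith
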